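/- Let (X_i)_{i∈ℕ} and (X′_i)_{i∈ℕ} be two independent i.i.d. sequences with values in {S,H}, each with probability q of S and p of H, and let G′ be a Bernoulli random variable of parameter γ independent of both. Let n₁ ≥ 2 be an integer. Define V = 1 if there exists k with 2 ≤ k ≤ n₁ such that X_i = S for all 0 ≤ i < k and X_j = H for all k ≤ j < 2k − 1, and V = 0 otherwise; let E′ be the event {X′_0 = H} ∪ {X′_0 = S, X′_1 = H, X′_2 = H, G′ = 0}; and set U_h = 1_{{X_0 = S, X_1 = H, X_2 = H}} + 1_{E′}·V (the number of uncles created in the cycle and referred by honest nephews). Then E[U_h] = p²q + ( p + (1 − γ)p²q )·pq²·(1 − (pq)^{n₁−1})/(1 − pq). -/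

import Mathlib

open MeasureTheory ENNReal
open scoped BigOperators Classical

/-- Blocks are labelled by `Bool`: `true` = `S` (attacker block), `false` = `H`
(honest block). `V = 1` iff the cycle (given by the first sequence) is `S^k H^(k-1)`
for some `2 ≤ k ≤ n₁`. -/
noncomputable def Vval (n₁ : ℕ) (ω : ℕ → Bool) : ℕ :=
  if ∃ k, 2 ≤ k ∧ k ≤ n₁ ∧ (∀ i, i < k → ω i = true) ∧
      ∀ j, k ≤ j → j < 2 * k - 1 → ω j = false then 1 else 0

/-- `U_h = 1_{X_0 = S, X_1 = H, X_2 = H} + 1_{E'} · V`, where `E'` is the event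
`{X'_0 = H} ∪ {X'_0 = S, X'_1 = H, X'_2 = H, G' = 0}`: the number of uncles created in
the cycle and referred by honest nephews. The point of the augmented space is
`x = (ω, ω', g)` with `ω = (X_i)`, `ω' = (X'_i)` and `g = G'`. -/
noncomputable def Uh (n₁ : ℕ) (x : (ℕ → Bool) × (ℕ → Bool) × Bool) : ℕ :=
  (if x.1 0 = true ∧ x.1 1 = false ∧ x.1 2 = false then 1 else 0) +
    (if x.2.1 0 = false ∨
        (x.2.1 0 = true ∧ x.2.1 1 = false ∧ x.2.1 2 = false ∧ x.2.2 = false)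
      then 1 else 0) * Vval n₁ x.1

lemma sum_ext (f : Bool → ℝ≥0∞) (hf : f false + f true = 1) (m d : ℕ) (w : Fin m → Bool) :
    ∑ t : Fin (m + d) → Bool,
      (if ∀ i : Fin m, t (Fin.castLE (Nat.le_add_right m d) i) = w i
        then ∏ i, f (t i) else 0) = ∏ i, f (w i) := by
  induction d with
  | zero =>
      have h0 := Fintype.sum_eq_single (f := fun t : Fin (m + 0) → Bool =>
        (if ∀ i : Fin m, t (Fin.castLE (Nat.le_add_right m 0) i) = w i
          then ∏ i, f (t i) else 0)) w (by
        intro t ht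
        rw [if_neg]
        intro h
        exact ht (funext fun i => by simpa using h i))
      rw [h0]
      simp
  | succ d ih =>
      calc (∑ t : Fin (m + (d+1)) → Bool,
            if ∀ i : Fin m, t (Fin.castLE (Nat.le_add_right m (d+1)) i) = w i
              then ∏ i, f (t i) else 0)
          = ∑ p : Bool × (Fin (m + d) → Bool),
              (if ∀ i : Fin m, p.2 (Fin.castLE (Nat.le_add_right m d) i) = w i
                then ∏ i, f (p.2 i) else 0) * f p.1 := by
            refine (Fintype.sum_equiv
              (Fin.snocEquiv (fun _ : Fin (m + (d+1)) => Bool)) _ _ ?_).symm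
            rintro ⟨b, s⟩
            have hsn : (Fin.snocEquiv (fun _ : Fin (m + (d+1)) => Bool)) (b, s)
                = Fin.snoc s b := rfl
            rw [hsn]
            dsimp only
            have hc : (∀ i : Fin m,
                (Fin.snoc s b : Fin (m + (d+1)) → Bool)
                  (Fin.castLE (Nat.le_add_right m (d+1)) i) = w i) ↔
                (∀ i : Fin m, s (Fin.castLE (Nat.le_add_right m d) i) = w i) := by
              refine forall_congr' fun i => ?_
              rw [show (Fin.castLE (Nat.le_add_right m (d+1)) i)
                  = Fin.castSucc (Fin.castLE (Nat.le_add_right m d) i) from rfl,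
                Fin.snoc_castSucc]
            have hp : (∏ i : Fin (m + (d+1)),
                f ((Fin.snoc s b : Fin (m + (d+1)) → Bool) i))
                = (∏ i : Fin (m + d), f (s i)) * f b := by
              show (∏ i : Fin ((m + d) + 1), f ((Fin.snoc s b : Fin ((m+d)+1) → Bool) i)) = _
              rw [Fin.prod_univ_castSucc]; simp
            rw [ite_mul, zero_mul, if_congr hc hp rfl]
        _ = ∏ i, f (w i) := by
            rw [Fintype.sum_prod_type]
            simp only [← Finset.sum_mul]
            rw [Fintype.sum_bool, ← mul_add, add_comm (f true), hf, mul_one, ih]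

lemma sum_ext' (f : Bool → ℝ≥0∞) (hf : f false + f true = 1) (n m : ℕ) (h : m ≤ n)
    (w : Fin m → Bool) :
    ∑ t : Fin n → Bool,
      (if ∀ i : Fin m, t (Fin.castLE h i) = w i then ∏ i, f (t i) else 0)
      = ∏ i, f (w i) := by
  obtain ⟨d, rfl⟩ : ∃ d, n = m + d := ⟨n - m, (Nat.add_sub_cancel' h).symm⟩
  exact sum_ext f hf m d w

abbrev X := (ℕ → Bool) × (ℕ → Bool) × Bool

lemma measCyl (n : ℕ) (w w' : Fin n → Bool) (g : Bool) :
    MeasurableSet {x : X | (∀ i : Fin n, x.1 i = w i) ∧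
      (∀ i : Fin n, x.2.1 i = w' i) ∧ x.2.2 = g} := by
  simp only [Set.setOf_and, Set.setOf_forall]
  refine MeasurableSet.inter ?_ (MeasurableSet.inter ?_ ?_)
  · exact MeasurableSet.iInter fun i => measurableSet_eq_fun
      ((measurable_pi_apply (i : ℕ)).comp' measurable_fst) measurable_const
  · exact MeasurableSet.iInter fun i => measurableSet_eq_fun
      ((measurable_pi_apply (i : ℕ)).comp' (measurable_fst.comp' measurable_snd))
      measurable_const
  · exact measurableSet_eq_fun (measurable_snd.comp' measurable_snd) measurable_const

lemma measure_cyl (f gf : Bool → ℝ≥0∞) (hf : f false + f true = 1)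
    (ν : Measure X)
    (hν : ∀ (n : ℕ) (w w' : Fin n → Bool) (g : Bool),
      ν {x : X | (∀ i : Fin n, x.1 i = w i) ∧ (∀ i : Fin n, x.2.1 i = w' i) ∧
          x.2.2 = g} = (∏ i, f (w i)) * (∏ i, f (w' i)) * gf g)
    (n m : ℕ) (h : m ≤ n) (w : Fin n → Bool) (w' : Fin m → Bool) (Gs : Finset Bool) :
    ν {x : X | (∀ i : Fin n, x.1 i = w i) ∧ (∀ i : Fin m, x.2.1 i = w' i) ∧
        x.2.2 ∈ Gs}
      = (∏ i, f (w i)) * (∏ i, f (w' i)) * (∑ g ∈ Gs, gf g) := by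
  classical
  set W : ℝ≥0∞ := ∏ i, f (w i) with hW
  have hT : {x : X | (∀ i : Fin n, x.1 i = w i) ∧ (∀ i : Fin m, x.2.1 i = w' i) ∧
        x.2.2 ∈ Gs}
      = ⋃ c ∈ Finset.univ.filter (fun c : (Fin n → Bool) × Bool =>
          (∀ i : Fin m, c.1 (Fin.castLE h i) = w' i) ∧ c.2 ∈ Gs),
          {x : X | (∀ i : Fin n, x.1 i = w i) ∧ (∀ i : Fin n, x.2.1 i = c.1 i) ∧
            x.2.2 = c.2} := by
    ext x
    simp only [Set.mem_iUnion, Finset.mem_filter, Finset.mem_univ, true_and,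
      Set.mem_setOf_eq]
    constructor
    · rintro ⟨h1, h2, h3⟩
      exact ⟨(fun i => x.2.1 i, x.2.2), ⟨fun i => h2 i, h3⟩, h1, fun i => rfl, rfl⟩
    · rintro ⟨c, ⟨hA1, hG⟩, h1, h2, h3⟩
      exact ⟨h1, fun i => (h2 (Fin.castLE h i)).trans (hA1 i), h3 ▸ hG⟩
  rw [hT, measure_biUnion_finset ?disj (fun c _ => measCyl n w c.1 c.2)]
  case disj =>
    intro c _ c' _ hne
    refine Set.disjoint_left.2 fun x hx hx' => hne ?_
    obtain ⟨-, h2, h3⟩ := hx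
    obtain ⟨-, h2', h3'⟩ := hx'
    exact Prod.ext (funext fun i => (h2 i).symm.trans (h2' i)) (h3.symm.trans h3')
  simp_rw [hν]
  rw [Finset.sum_filter, Fintype.sum_prod_type]
  have inner : ∀ t : Fin n → Bool,
      (∑ g : Bool, if (∀ i : Fin m, t (Fin.castLE h i) = w' i) ∧ g ∈ Gs
          then W * (∏ i, f (t i)) * gf g else 0)
      = (if (∀ i : Fin m, t (Fin.castLE h i) = w' i) then (∏ i, f (t i)) else 0) *
          (W * ∑ g ∈ Gs, gf g) := by
    intro t
    by_cases hAt : ∀ i : Fin m, t (Fin.castLE h i) = w' i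
    · have h1 : ∀ g : Bool, (if (∀ i : Fin m, t (Fin.castLE h i) = w' i) ∧ g ∈ Gs
          then W * (∏ i, f (t i)) * gf g else 0)
          = if g ∈ Gs then W * (∏ i, f (t i)) * gf g else 0 :=
        fun g => if_congr (and_iff_right hAt) rfl rfl
      have h2 : Finset.univ.filter (fun g : Bool => g ∈ Gs) = Gs := by
        ext g; simp
      simp_rw [h1]
      rw [if_pos hAt, ← Finset.sum_filter, h2, ← Finset.mul_sum]
      ring
    · simp [hAt]
  simp only [← hW]
  simp_rw [inner]
  rw [← Finset.sum_mul, sum_ext' f hf n m h w']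
  ring

lemma geom_real (q p : ℝ) (hq0 : 0 < q) (hq : q < 1 / 2) (hp : p = 1 - q)
    (n₁ : ℕ) (hn₁ : 2 ≤ n₁) :
    ∑ k ∈ Finset.Icc 2 n₁, q ^ k * p ^ (k - 1)
      = p * q ^ 2 * (1 - (p * q) ^ (n₁ - 1)) / (1 - p * q) := by
  have hpq1 : p * q < 1 := by nlinarith
  have hpqne : p * q ≠ 1 := ne_of_lt hpq1
  have h1 : ∑ k ∈ Finset.Icc 2 n₁, q ^ k * p ^ (k - 1)
      = ∑ j ∈ Finset.range (n₁ - 1), q ^ 2 * p * (p * q) ^ j := by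
    rw [show Finset.Icc 2 n₁ = Finset.Ico 2 (n₁ + 1) from (Finset.Ico_add_one_right_eq_Icc _ _).symm,
      Finset.sum_Ico_eq_sum_range]
    refine Finset.sum_congr rfl fun j _ => ?_
    rw [show 2 + j - 1 = j + 1 by omega, show 2 + j = (j + 1) + 1 by omega]
    rw [mul_pow]
    ring
  rw [h1, ← Finset.mul_sum, geom_sum_eq hpqne]
  have h2 : (1 : ℝ) - p * q ≠ 0 := by nlinarith
  have h3 : p * q - 1 ≠ 0 := by intro h; exact h2 (by linarith)
  field_simp
  rw [div_eq_div_iff (by intro h; apply h3; linarith) (by intro h; apply h2; linarith)]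
  ring
noncomputable def fB (q p : ℝ) : Bool → ℝ≥0∞ :=
  fun b => if b then ENNReal.ofReal q else ENNReal.ofReal p

noncomputable def gB (γ : ℝ) : Bool → ℝ≥0∞ :=
  fun b => if b then ENNReal.ofReal γ else ENNReal.ofReal (1 - γ)

def Ck (k : ℕ) (ω : ℕ → Bool) : Prop :=
  (∀ i, i < k → ω i = true) ∧ ∀ j, k ≤ j → j < 2 * k - 1 → ω j = false

lemma Ck_iff (k : ℕ) (hk : 2 ≤ k) (ω : ℕ → Bool) :
    Ck k ω ↔ ∀ i : Fin (2 * k - 1), ω i = decide ((i : ℕ) < k) := by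
  constructor
  · rintro ⟨h1, h2⟩ i
    by_cases hik : (i : ℕ) < k
    · simp [hik, h1 _ hik]
    · simp [hik, h2 _ (not_lt.1 hik) i.isLt]
  · intro h
    constructor
    · intro i hik
      have := h ⟨i, by omega⟩
      simpa [hik] using this
    · intro j hkj hj2
      have := h ⟨j, hj2⟩
      simpa [not_lt.2 hkj] using this

lemma Ck_disj {k k' : ℕ} (hk2 : 2 ≤ k) (hkk : k < k') {ω : ℕ → Bool}
    (h : Ck k ω) (h' : Ck k' ω) : False := by
  have h2 := h.2 k le_rfl (by omega)
  have h1 := h'.1 k hkk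
  simp [h2] at h1

lemma prod_wk (f : Bool → ℝ≥0∞) (k : ℕ) (hk : 1 ≤ k) :
    ∏ i : Fin (2 * k - 1), f (decide ((i : ℕ) < k))
      = f true ^ k * f false ^ (k - 1) := by
  rw [Fin.prod_univ_eq_prod_range (fun i => f (decide (i < k))) (2 * k - 1),
    show 2 * k - 1 = k + (k - 1) by omega, Finset.prod_range_add]
  congr 1
  · rw [Finset.prod_congr rfl (fun i hi => by
      simp [Finset.mem_range.1 hi] : ∀ i ∈ Finset.range k,
        (fun i => f (decide (i < k))) i = f true)]
    simp
  · rw [Finset.prod_congr rfl (fun i hi => by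
      simp : ∀ i ∈ Finset.range (k - 1),
        (fun i => f (decide (k + i < k))) i = f false)]
    simp

lemma measEv1 (j : ℕ) (b : Bool) : MeasurableSet {x : X | x.1 j = b} :=
  measurableSet_eq_fun ((measurable_pi_apply j).comp' measurable_fst) measurable_const

lemma measEv2 (j : ℕ) (b : Bool) : MeasurableSet {x : X | x.2.1 j = b} :=
  measurableSet_eq_fun ((measurable_pi_apply j).comp'
    (measurable_fst.comp' measurable_snd)) measurable_const

lemma measEvg (b : Bool) : MeasurableSet {x : X | x.2.2 = b} :=
  measurableSet_eq_fun (measurable_snd.comp' measurable_snd) measurable_const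

lemma measCk (k : ℕ) : MeasurableSet {x : X | Ck k x.1} := by
  have : {x : X | Ck k x.1} =
      (⋂ i, ⋂ (_ : i < k), {x : X | x.1 i = true}) ∩
        (⋂ j, ⋂ (_ : k ≤ j), ⋂ (_ : j < 2 * k - 1), {x : X | x.1 j = false}) := by
    ext x
    simp only [Ck, Set.mem_inter_iff, Set.mem_iInter, Set.mem_setOf_eq]
  rw [this]
  exact (MeasurableSet.iInter fun i => MeasurableSet.iInter fun _ => measEv1 i true).inter
    (MeasurableSet.iInter fun j => MeasurableSet.iInter fun _ =>
      MeasurableSet.iInter fun _ => measEv1 j false)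

def Aset : Set X := {x | x.1 0 = true ∧ x.1 1 = false ∧ x.1 2 = false}

def Econd (x : X) : Prop :=
  x.2.1 0 = false ∨ (x.2.1 0 = true ∧ x.2.1 1 = false ∧ x.2.1 2 = false ∧ x.2.2 = false)

def Dset (n₁ : ℕ) : Set X := {x | Econd x ∧ ∃ k, 2 ≤ k ∧ k ≤ n₁ ∧ Ck k x.1}

lemma measAset : MeasurableSet Aset := by
  unfold Aset
  simp only [Set.setOf_and]
  exact (measEv1 0 true).inter ((measEv1 1 false).inter (measEv1 2 false))

lemma measEcond : MeasurableSet {x : X | Econd x} := by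
  unfold Econd
  simp only [Set.setOf_or, Set.setOf_and]
  exact (measEv2 0 false).union ((measEv2 0 true).inter
    ((measEv2 1 false).inter ((measEv2 2 false).inter (measEvg false))))

lemma measDset (n₁ : ℕ) : MeasurableSet (Dset n₁) := by
  have : Dset n₁ = {x : X | Econd x} ∩
      ⋃ k, ⋃ (_ : 2 ≤ k ∧ k ≤ n₁), {x : X | Ck k x.1} := by
    ext x
    simp only [Dset, Set.mem_inter_iff, Set.mem_iUnion, Set.mem_setOf_eq]
    tauto
  rw [this]
  exact measEcond.inter (MeasurableSet.iUnion fun k =>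
    MeasurableSet.iUnion fun _ => measCk k)

/-- With `(X_i)` and `(X'_i)` two independent i.i.d. Bernoulli sequences (probability `q`
of `S`, `p` of `H`) and `G'` an independent Bernoulli variable of parameter `γ`,
`E[U_h] = p²q + (p + (1-γ)p²q) · pq² (1 - (pq)^(n₁-1)) / (1 - pq)`. -/
theorem expected_Uh (q p γ : ℝ) (hq0 : 0 < q) (hq : q < 1 / 2) (hp : p = 1 - q)
    (hγ0 : 0 ≤ γ) (hγ1 : γ ≤ 1) (n₁ : ℕ) (hn₁ : 2 ≤ n₁)
    (ν : Measure ((ℕ → Bool) × (ℕ → Bool) × Bool)) [IsProbabilityMeasure ν]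
    (hν : ∀ (n : ℕ) (w w' : Fin n → Bool) (g : Bool),
      ν {x | (∀ i : Fin n, x.1 i = w i) ∧ (∀ i : Fin n, x.2.1 i = w' i) ∧ x.2.2 = g} =
        (∏ i : Fin n, (if w i then ENNReal.ofReal q else ENNReal.ofReal p)) *
          (∏ i : Fin n, (if w' i then ENNReal.ofReal q else ENNReal.ofReal p)) *
          (if g then ENNReal.ofReal γ else ENNReal.ofReal (1 - γ))) :
    ∫⁻ x, (Uh n₁ x : ℝ≥0∞) ∂ν =
      ENNReal.ofReal (p ^ 2 * q +
        (p + (1 - γ) * p ^ 2 * q) * (p * q ^ 2) * (1 - (p * q) ^ (n₁ - 1)) /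
          (1 - p * q)) := by
  have hp0 : 0 < p := by rw [hp]; linarith
  have hγ1' : 0 ≤ 1 - γ := by linarith
  have hν' : ∀ (n : ℕ) (w w' : Fin n → Bool) (g : Bool),
      ν {x : X | (∀ i : Fin n, x.1 i = w i) ∧ (∀ i : Fin n, x.2.1 i = w' i) ∧
          x.2.2 = g} =
        (∏ i, fB q p (w i)) * (∏ i, fB q p (w' i)) * gB γ g := hν
  have hf : fB q p false + fB q p true = 1 := by
    simp only [fB]
    norm_num
    rw [← ENNReal.ofReal_add hp0.le hq0.le, show p + q = 1 by rw [hp]; ring,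
      ENNReal.ofReal_one]
  have hg1 : (∑ g : Bool, gB γ g) = 1 := by
    rw [Fintype.sum_bool]
    simp only [gB]
    norm_num
    rw [← ENNReal.ofReal_add hγ0 hγ1', show γ + (1 - γ) = 1 by ring,
      ENNReal.ofReal_one]
  -- Step 1: rewrite the integrand
  have hUh : ∀ x : X, ((Uh n₁ x : ℕ) : ℝ≥0∞)
      = Aset.indicator 1 x + (Dset n₁).indicator 1 x := by
    intro x
    rw [Set.indicator_apply, Set.indicator_apply]
    simp only [Uh, Vval, Aset, Dset, Econd, Ck, Set.mem_setOf_eq, Pi.one_apply]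
    by_cases h1 : x.1 0 = true ∧ x.1 1 = false ∧ x.1 2 = false <;>
      by_cases h2 : x.2.1 0 = false ∨
        (x.2.1 0 = true ∧ x.2.1 1 = false ∧ x.2.1 2 = false ∧ x.2.2 = false) <;>
      by_cases h3 : ∃ k, 2 ≤ k ∧ k ≤ n₁ ∧ (∀ i, i < k → x.1 i = true) ∧
        ∀ j, k ≤ j → j < 2 * k - 1 → x.1 j = false <;>
      simp [h1, h2, h3] <;> norm_num
  -- Step 2: the integral splits
  have hsplit : ∫⁻ x, (Uh n₁ x : ℝ≥0∞) ∂ν = ν Aset + ν (Dset n₁) := by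
    calc ∫⁻ x, (Uh n₁ x : ℝ≥0∞) ∂ν
        = ∫⁻ x, (Aset.indicator 1 x + (Dset n₁).indicator 1 x) ∂ν :=
          lintegral_congr hUh
      _ = ν Aset + ν (Dset n₁) := by
          rw [lintegral_add_left (measurable_one.indicator measAset),
            lintegral_indicator_one measAset, lintegral_indicator_one (measDset n₁)]
  -- Step 3: measure of Aset
  have hAeq : Aset = {x : X | (∀ i : Fin 3, x.1 i = ![true, false, false] i) ∧
      (∀ i : Fin 0, x.2.1 i = ![] i) ∧ x.2.2 ∈ (Finset.univ : Finset Bool)} := by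
    ext x
    simp [Aset, Fin.forall_fin_succ, Fin.isValue]
  have hνA : ν Aset = ENNReal.ofReal (q * p * p) := by
    rw [hAeq, measure_cyl (fB q p) (gB γ) hf ν hν' 3 0 (by omega)]
    rw [Fin.prod_univ_three, Fin.prod_univ_zero,
      show (∑ g ∈ (Finset.univ : Finset Bool), gB γ g) = 1 from hg1]
    simp only [fB, Matrix.cons_val_zero, Matrix.cons_val_one, Matrix.head_cons,
      Matrix.cons_val_two, Matrix.tail_cons]
    norm_num
    rw [← ENNReal.ofReal_mul hq0.le, ← ENNReal.ofReal_mul (by positivity)]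
  -- Step 4: measure of Dset
  have hc0 : 0 ≤ p + (1 - γ) * p ^ 2 * q :=
    add_nonneg hp0.le (mul_nonneg (mul_nonneg hγ1' (by positivity)) hq0.le)
  have hDeq : Dset n₁ = ⋃ k ∈ Finset.Icc 2 n₁,
      ({x : X | Ck k x.1 ∧ x.2.1 0 = false} ∪
       {x : X | Ck k x.1 ∧ (x.2.1 0 = true ∧ x.2.1 1 = false ∧ x.2.1 2 = false ∧
          x.2.2 = false)}) := by
    ext x
    simp only [Dset, Econd, Set.mem_iUnion, Set.mem_union, Set.mem_setOf_eq,
      Finset.mem_Icc, exists_prop]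
    constructor
    · rintro ⟨hE, k, hk2, hkn, hCk⟩
      refine ⟨k, ⟨hk2, hkn⟩, ?_⟩
      rcases hE with h | h
      exacts [Or.inl ⟨hCk, h⟩, Or.inr ⟨hCk, h⟩]
    · rintro ⟨k, ⟨hk2, hkn⟩, h | h⟩
      exacts [⟨Or.inl h.2, k, hk2, hkn, h.1⟩, ⟨Or.inr h.2, k, hk2, hkn, h.1⟩]
  have hpieceMeas : ∀ k : ℕ, MeasurableSet
      ({x : X | Ck k x.1 ∧ x.2.1 0 = false} ∪
       {x : X | Ck k x.1 ∧ (x.2.1 0 = true ∧ x.2.1 1 = false ∧ x.2.1 2 = false ∧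
          x.2.2 = false)}) := by
    intro k
    apply MeasurableSet.union
    · rw [Set.setOf_and]
      exact (measCk k).inter (measEv2 0 false)
    · simp only [Set.setOf_and]
      exact (measCk k).inter ((measEv2 0 true).inter ((measEv2 1 false).inter
        ((measEv2 2 false).inter (measEvg false))))
  have hdisjk : (↑(Finset.Icc 2 n₁) : Set ℕ).PairwiseDisjoint
      (fun k => {x : X | Ck k x.1 ∧ x.2.1 0 = false} ∪
       {x : X | Ck k x.1 ∧ (x.2.1 0 = true ∧ x.2.1 1 = false ∧ x.2.1 2 = false ∧
          x.2.2 = false)}) := by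
    intro k hk k' hk' hne
    simp only [Finset.coe_Icc, Set.mem_Icc] at hk hk'
    refine Set.disjoint_left.2 fun x hx hx' => ?_
    have hCk : Ck k x.1 := by rcases hx with h | h <;> exact h.1
    have hCk' : Ck k' x.1 := by rcases hx' with h | h <;> exact h.1
    rcases lt_or_gt_of_ne hne with h | h
    · exact Ck_disj hk.1 h hCk hCk'
    · exact Ck_disj hk'.1 h hCk' hCk
  have hpiece : ∀ k ∈ Finset.Icc 2 n₁,
      ν ({x : X | Ck k x.1 ∧ x.2.1 0 = false} ∪
       {x : X | Ck k x.1 ∧ (x.2.1 0 = true ∧ x.2.1 1 = false ∧ x.2.1 2 = false ∧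
          x.2.2 = false)})
      = ENNReal.ofReal (q ^ k * p ^ (k - 1) * (p + (1 - γ) * p ^ 2 * q)) := by
    intro k hk
    obtain ⟨hk2, hkn⟩ := Finset.mem_Icc.1 hk
    rw [measure_union ?dsj (by
      simp only [Set.setOf_and]
      exact (measCk k).inter ((measEv2 0 true).inter ((measEv2 1 false).inter
        ((measEv2 2 false).inter (measEvg false)))))]
    case dsj =>
      refine Set.disjoint_left.2 fun x hx hx' => ?_
      simp only [Set.mem_setOf_eq] at hx hx'
      rw [hx.2] at hx'
      simp at hx'
    have e1 : {x : X | Ck k x.1 ∧ x.2.1 0 = false}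
        = {x : X | (∀ i : Fin (2 * k - 1),
              x.1 i = (fun i : Fin (2 * k - 1) => decide ((i : ℕ) < k)) i) ∧
            (∀ i : Fin 1, x.2.1 i = ![false] i) ∧
            x.2.2 ∈ (Finset.univ : Finset Bool)} := by
      ext x
      simp only [Set.mem_setOf_eq, Ck_iff k hk2 x.1, Fin.forall_fin_one,
        Finset.mem_univ, and_true, Matrix.cons_val_zero, Matrix.cons_val_fin_one]
      rfl
    have e2 : {x : X | Ck k x.1 ∧ (x.2.1 0 = true ∧ x.2.1 1 = false ∧
          x.2.1 2 = false ∧ x.2.2 = false)}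
        = {x : X | (∀ i : Fin (2 * k - 1),
              x.1 i = (fun i : Fin (2 * k - 1) => decide ((i : ℕ) < k)) i) ∧
            (∀ i : Fin 3, x.2.1 i = ![true, false, false] i) ∧
            x.2.2 ∈ ({false} : Finset Bool)} := by
      ext x
      simp only [Set.mem_setOf_eq, Ck_iff k hk2 x.1, Fin.forall_fin_succ,
        Finset.mem_singleton, Matrix.cons_val_zero, Matrix.cons_val_one,
        Matrix.head_cons]
      simp
      tauto
    rw [e1, e2, measure_cyl (fB q p) (gB γ) hf ν hν' (2 * k - 1) 1 (by omega),
      measure_cyl (fB q p) (gB γ) hf ν hν' (2 * k - 1) 3 (by omega),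
      prod_wk (fB q p) k (by omega), Fin.prod_univ_one, Fin.prod_univ_three,
      show (∑ g ∈ (Finset.univ : Finset Bool), gB γ g) = 1 from hg1,
      Finset.sum_singleton]
    simp only [fB, gB, Matrix.cons_val_zero, Matrix.cons_val_one, Matrix.head_cons,
      Matrix.cons_val_two, Matrix.tail_cons]
    norm_num
    rw [← ENNReal.ofReal_pow hq0.le, ← ENNReal.ofReal_pow hp0.le,
      ← ENNReal.ofReal_mul (by positivity), ← ENNReal.ofReal_mul (by positivity),
      ← ENNReal.ofReal_mul hq0.le, ← ENNReal.ofReal_mul (by positivity),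
      ← ENNReal.ofReal_mul (by positivity), ← ENNReal.ofReal_mul (by positivity),
      ← ENNReal.ofReal_add (by positivity) (by positivity)]
    congr 1
    ring
  have hνD : ν (Dset n₁)
      = ENNReal.ofReal (∑ k ∈ Finset.Icc 2 n₁,
          q ^ k * p ^ (k - 1) * (p + (1 - γ) * p ^ 2 * q)) := by
    rw [hDeq, measure_biUnion_finset hdisjk (fun k _ => hpieceMeas k),
      Finset.sum_congr rfl hpiece,
      ENNReal.ofReal_sum_of_nonneg (fun i _ => by positivity)]
  -- Step 5: conclude
  rw [hsplit, hνA, hνD,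
    ← ENNReal.ofReal_add (by positivity) (Finset.sum_nonneg fun i _ => by positivity)]
  congr 1
  rw [← Finset.sum_mul, geom_real q p hq0 hq hp n₁ hn₁]
  ring
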